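/- For every integer k ≥ 3, the set A = {a_1,…,a_k} is a resolving set of the graph G_k, and every resolving set of G_k has cardinality at least k; hence the metric dimension of G_k equals k. -/

import Mathlib

open SimpleGraph

lemma dist_eq_two' {V : Type*} {G : SimpleGraph V} {x y z : V}
    (hne : x ≠ y) (hadj : ¬ G.Adj x y) (h1 : G.Adj x z) (h2 : G.Adj z y) :
    G.dist x y = 2 := by
  have hle : G.dist x y ≤ 2 := by
    have := SimpleGraph.dist_le (SimpleGraph.Walk.cons h1 h2.toWalk)
    simpa using this
  have h0 : G.dist x y ≠ 0 := by
    have hr : G.Reachable x y := ⟨SimpleGraph.Walk.cons h1 h2.toWalk⟩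
    have := hr.pos_dist_of_ne hne; omega
  have h1' : G.dist x y ≠ 1 := fun h => hadj (SimpleGraph.dist_eq_one_iff_adj.mp h)
  omega

lemma dist_eq_three' {V : Type*} {G : SimpleGraph V} {x y u v : V}
    (hne : x ≠ y) (hadj : ¬ G.Adj x y) (hno : ∀ z, G.Adj x z → ¬ G.Adj z y)
    (h1 : G.Adj x u) (h2 : G.Adj u v) (h3 : G.Adj v y) :
    G.dist x y = 3 := by
  have hle : G.dist x y ≤ 3 := by
    have := SimpleGraph.dist_le (SimpleGraph.Walk.cons h1 (SimpleGraph.Walk.cons h2 h3.toWalk))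
    simpa using this
  have h0 : G.dist x y ≠ 0 := by
    have hr : G.Reachable x y := ⟨SimpleGraph.Walk.cons h1 (SimpleGraph.Walk.cons h2 h3.toWalk)⟩
    have := hr.pos_dist_of_ne hne; omega
  have h1' : G.dist x y ≠ 1 := fun h => hadj (SimpleGraph.dist_eq_one_iff_adj.mp h)
  have h2' : G.dist x y ≠ 2 := by
    intro h
    obtain ⟨p, hp⟩ := SimpleGraph.exists_walk_of_dist_ne_zero h0
    rw [h] at hp
    cases p with
    | nil => simp at hp
    | cons ha q =>
      cases q with
      | nil => simp at hp
      | cons hb r =>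
        cases r with
        | nil => exact hno _ ha hb
        | cons _ _ => simp [SimpleGraph.Walk.length_cons] at hp
  omega


/-- `W` is a resolving set of `G`: every pair of distinct vertices is
distinguished by its distance to some vertex of `W`. -/
def IsResolving {V : Type*} (G : SimpleGraph V) (W : Set V) : Prop :=
  ∀ x y : V, x ≠ y → ∃ z ∈ W, G.dist x z ≠ G.dist y z

/-- The metric dimension of `G`: the minimum cardinality of a resolving set. -/
noncomputable def metricDim {V : Type*} (G : SimpleGraph V) : ℕ :=
  sInf {n | ∃ W : Set V, W.ncard = n ∧ IsResolving G W}

/-- The vertex set of `G_k`: the set `A` (a copy of `Fin k`), the set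
`B = {b_S : ∅ ≠ S ⊆ A}` and the set `C = {c_S : ∅ ≠ S ⊆ A}`. -/
abbrev GkVert (k : ℕ) :=
  Fin k ⊕ ({S : Finset (Fin k) // S.Nonempty} ⊕ {S : Finset (Fin k) // S.Nonempty})

/-- The relation generating the edges of `G_k`: each of `A`, `B`, `C` is a clique,
`b_S` is adjacent to exactly the vertices of `A` in `S`, and `b_S` is adjacent to `c_S`. -/
def GkRel (k : ℕ) : GkVert k → GkVert k → Prop
  | Sum.inl _, Sum.inl _ => True
  | Sum.inl a, Sum.inr (Sum.inl S) => a ∈ S.val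
  | Sum.inr (Sum.inl _), Sum.inr (Sum.inl _) => True
  | Sum.inr (Sum.inl S), Sum.inr (Sum.inr T) => S = T
  | Sum.inr (Sum.inr _), Sum.inr (Sum.inr _) => True
  | _, _ => False

/-- The graph `G_k` from Definition 3.5. -/
def Gk (k : ℕ) : SimpleGraph (GkVert k) := SimpleGraph.fromRel (GkRel k)

variable {k : ℕ}

@[simp] lemma adj_aa {i j : Fin k} : (Gk k).Adj (Sum.inl i) (Sum.inl j) ↔ i ≠ j := by
  simp [Gk, GkRel, SimpleGraph.fromRel_adj]

@[simp] lemma adj_ab {i : Fin k} {S} : (Gk k).Adj (Sum.inl i) (Sum.inr (Sum.inl S)) ↔ i ∈ S.val := by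
  simp [Gk, GkRel, SimpleGraph.fromRel_adj]

@[simp] lemma adj_ac {i : Fin k} {S} : ¬ (Gk k).Adj (Sum.inl i) (Sum.inr (Sum.inr S)) := by
  simp [Gk, GkRel, SimpleGraph.fromRel_adj]

@[simp] lemma adj_bb {S T : {S : Finset (Fin k) // S.Nonempty}} :
    (Gk k).Adj (Sum.inr (Sum.inl S)) (Sum.inr (Sum.inl T)) ↔ S ≠ T := by
  simp [Gk, GkRel, SimpleGraph.fromRel_adj]

@[simp] lemma adj_bc {S T : {S : Finset (Fin k) // S.Nonempty}} :
    (Gk k).Adj (Sum.inr (Sum.inl S)) (Sum.inr (Sum.inr T)) ↔ S = T := by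
  simp [Gk, GkRel, SimpleGraph.fromRel_adj]

@[simp] lemma adj_cc {S T : {S : Finset (Fin k) // S.Nonempty}} :
    (Gk k).Adj (Sum.inr (Sum.inr S)) (Sum.inr (Sum.inr T)) ↔ S ≠ T := by
  simp [Gk, GkRel, SimpleGraph.fromRel_adj]

section dists
variable {i j : Fin k} {S T : {S : Finset (Fin k) // S.Nonempty}}

lemma dist_aa (h : i ≠ j) : (Gk k).dist (Sum.inl i) (Sum.inl j) = 1 :=
  SimpleGraph.dist_eq_one_iff_adj.mpr (adj_aa.mpr h)

lemma dist_ab_mem (h : i ∈ S.val) : (Gk k).dist (Sum.inl i) (Sum.inr (Sum.inl S)) = 1 :=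
  SimpleGraph.dist_eq_one_iff_adj.mpr (adj_ab.mpr h)

lemma dist_ab_not (h : i ∉ S.val) : (Gk k).dist (Sum.inl i) (Sum.inr (Sum.inl S)) = 2 := by
  have hne : (⟨insert i S.val, Finset.insert_nonempty _ _⟩ : {S : Finset (Fin k) // S.Nonempty}) ≠ S := by
    intro hEq
    apply h
    rw [← Subtype.ext_iff.mp hEq]
    exact Finset.mem_insert_self _ _
  exact dist_eq_two' (by simp) (by simpa using h)
    (z := Sum.inr (Sum.inl ⟨insert i S.val, Finset.insert_nonempty _ _⟩))
    (adj_ab.mpr (Finset.mem_insert_self _ _)) (adj_bb.mpr hne)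

lemma dist_ac_mem (h : i ∈ S.val) : (Gk k).dist (Sum.inl i) (Sum.inr (Sum.inr S)) = 2 :=
  dist_eq_two' (by simp) (by simp) (z := Sum.inr (Sum.inl S)) (adj_ab.mpr h) (adj_bc.mpr rfl)

lemma dist_ac_not (h : i ∉ S.val) : (Gk k).dist (Sum.inl i) (Sum.inr (Sum.inr S)) = 3 := by
  have hiS : (⟨{i}, Finset.singleton_nonempty i⟩ : {S : Finset (Fin k) // S.Nonempty}) ≠ S := by
    intro hEq; apply h; rw [← Subtype.ext_iff.mp hEq]; exact Finset.mem_singleton_self i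
  refine dist_eq_three' (by simp) (by simp) ?_
    (u := Sum.inr (Sum.inl ⟨{i}, Finset.singleton_nonempty i⟩)) (v := Sum.inr (Sum.inl S))
    (adj_ab.mpr (Finset.mem_singleton_self i)) (adj_bb.mpr hiS) (adj_bc.mpr rfl)
  rintro (a | U | U) h1 h2
  · exact adj_ac h2
  · have hUS : U = S := adj_bc.mp h2
    exact h (hUS ▸ adj_ab.mp h1)
  · exact adj_ac h1

lemma dist_bb (h : S ≠ T) : (Gk k).dist (Sum.inr (Sum.inl S)) (Sum.inr (Sum.inl T)) = 1 :=
  SimpleGraph.dist_eq_one_iff_adj.mpr (adj_bb.mpr h)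

lemma dist_cc (h : S ≠ T) : (Gk k).dist (Sum.inr (Sum.inr S)) (Sum.inr (Sum.inr T)) = 1 :=
  SimpleGraph.dist_eq_one_iff_adj.mpr (adj_cc.mpr h)

lemma dist_bc_eq : (Gk k).dist (Sum.inr (Sum.inl S)) (Sum.inr (Sum.inr S)) = 1 :=
  SimpleGraph.dist_eq_one_iff_adj.mpr (adj_bc.mpr rfl)

lemma dist_bc_ne (h : S ≠ T) : (Gk k).dist (Sum.inr (Sum.inl S)) (Sum.inr (Sum.inr T)) = 2 :=
  dist_eq_two' (by simp) (by simpa using h) (z := Sum.inr (Sum.inl T))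
    (adj_bb.mpr h) (adj_bc.mpr rfl)

end dists

section main
variable {i j : Fin k} {S T : {S : Finset (Fin k) // S.Nonempty}}

lemma dist_ab_cases (i : Fin k) (S : {S : Finset (Fin k) // S.Nonempty}) :
    (Gk k).dist (Sum.inl i) (Sum.inr (Sum.inl S)) = 1 ∨
    (Gk k).dist (Sum.inl i) (Sum.inr (Sum.inl S)) = 2 := by
  by_cases hm : i ∈ S.val
  · exact Or.inl (dist_ab_mem hm)
  · exact Or.inr (dist_ab_not hm)

lemma dist_ac_cases (i : Fin k) (S : {S : Finset (Fin k) // S.Nonempty}) :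
    (Gk k).dist (Sum.inl i) (Sum.inr (Sum.inr S)) = 2 ∨
    (Gk k).dist (Sum.inl i) (Sum.inr (Sum.inr S)) = 3 := by
  by_cases hm : i ∈ S.val
  · exact Or.inl (dist_ac_mem hm)
  · exact Or.inr (dist_ac_not hm)

lemma A_resolving (k : ℕ) :
    IsResolving (Gk k) (Set.range (Sum.inl : Fin k → GkVert k)) := by
  rintro (i | S | S) (j | T | T) hxy
  · -- a vs a
    refine ⟨Sum.inl i, ⟨i, rfl⟩, ?_⟩
    have hij : j ≠ i := fun h => hxy (by rw [h])
    rw [SimpleGraph.dist_self, dist_aa hij]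
    omega
  · -- a vs b
    refine ⟨Sum.inl i, ⟨i, rfl⟩, ?_⟩
    rw [SimpleGraph.dist_self, SimpleGraph.dist_comm]
    rcases dist_ab_cases i T with h | h <;> omega
  · -- a vs c
    refine ⟨Sum.inl i, ⟨i, rfl⟩, ?_⟩
    rw [SimpleGraph.dist_self, SimpleGraph.dist_comm]
    rcases dist_ac_cases i T with h | h <;> omega
  · -- b vs a
    refine ⟨Sum.inl j, ⟨j, rfl⟩, ?_⟩
    rw [SimpleGraph.dist_self, SimpleGraph.dist_comm]
    rcases dist_ab_cases j S with h | h <;> omega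
  · -- b vs b
    have hST : S ≠ T := fun h => hxy (by rw [h])
    have : ∃ a, ¬ (a ∈ S.val ↔ a ∈ T.val) := by
      by_contra h
      exact hST (Subtype.ext (Finset.ext fun a => not_not.mp (not_exists.mp h a)))
    obtain ⟨a, ha⟩ := this
    refine ⟨Sum.inl a, ⟨a, rfl⟩, ?_⟩
    rw [SimpleGraph.dist_comm (v := Sum.inl a), SimpleGraph.dist_comm (v := Sum.inl a)]
    by_cases hS : a ∈ S.val
    · have hT : a ∉ T.val := fun hT => ha ⟨fun _ => hT, fun _ => hS⟩
      rw [dist_ab_mem hS, dist_ab_not hT]; omega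
    · have hT : a ∈ T.val := by
        by_contra hT; exact ha ⟨fun h => absurd h hS, fun h => absurd h hT⟩
      rw [dist_ab_not hS, dist_ab_mem hT]; omega
  · -- b vs c
    obtain ⟨a, ha⟩ := S.2
    refine ⟨Sum.inl a, ⟨a, rfl⟩, ?_⟩
    rw [SimpleGraph.dist_comm (v := Sum.inl a), SimpleGraph.dist_comm (v := Sum.inl a),
      dist_ab_mem ha]
    rcases dist_ac_cases a T with h | h <;> omega
  · -- c vs a
    refine ⟨Sum.inl j, ⟨j, rfl⟩, ?_⟩
    rw [SimpleGraph.dist_self, SimpleGraph.dist_comm]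
    rcases dist_ac_cases j S with h | h <;> omega
  · -- c vs b
    obtain ⟨a, ha⟩ := T.2
    refine ⟨Sum.inl a, ⟨a, rfl⟩, ?_⟩
    rw [SimpleGraph.dist_comm (v := Sum.inl a), SimpleGraph.dist_comm (v := Sum.inl a),
      dist_ab_mem ha]
    rcases dist_ac_cases a S with h | h <;> omega
  · -- c vs c
    have hST : S ≠ T := fun h => hxy (by rw [h])
    have : ∃ a, ¬ (a ∈ S.val ↔ a ∈ T.val) := by
      by_contra h
      exact hST (Subtype.ext (Finset.ext fun a => not_not.mp (not_exists.mp h a)))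
    obtain ⟨a, ha⟩ := this
    refine ⟨Sum.inl a, ⟨a, rfl⟩, ?_⟩
    rw [SimpleGraph.dist_comm (v := Sum.inl a), SimpleGraph.dist_comm (v := Sum.inl a)]
    by_cases hS : a ∈ S.val
    · have hT : a ∉ T.val := fun hT => ha ⟨fun _ => hT, fun _ => hS⟩
      rw [dist_ac_mem hS, dist_ac_not hT]; omega
    · have hT : a ∈ T.val := by
        by_contra hT; exact ha ⟨fun h => absurd h hS, fun h => absurd h hT⟩
      rw [dist_ac_not hS, dist_ac_mem hT]; omega

lemma hpow4 : ∀ n : ℕ, n + 4 ≤ 2 ^ (n + 2) := by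
  intro n
  induction n with
  | zero => norm_num
  | succ m ih =>
    have h : 2 ^ (m + 1 + 2) = 2 ^ (m + 2) * 2 := by rw [pow_succ]
    omega

lemma card_nonempty_subsets (k : ℕ) :
    Fintype.card {S : Finset (Fin k) // S.Nonempty} = 2 ^ k - 1 := by
  have h1 : Fintype.card {S : Finset (Fin k) // S.Nonempty}
      = Fintype.card {S : Finset (Fin k) // ¬ (S = ∅)} :=
    Fintype.card_congr (Equiv.subtypeEquivRight fun S => by
      simp [Finset.nonempty_iff_ne_empty])
  rw [h1, Fintype.card_subtype_compl, Fintype.card_subtype_eq, Fintype.card_finset,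
    Fintype.card_fin]

lemma lower_bound (k : ℕ) (hk : 3 ≤ k) (W : Set (GkVert k)) (hW : IsResolving (Gk k) W) :
    k ≤ W.ncard := by
  classical
  have hWfin : W.Finite := Set.toFinite W
  have hncard : W.ncard = hWfin.toFinset.card := Set.ncard_eq_toFinset_card W hWfin
  by_cases hA : ∀ i : Fin k, Sum.inl i ∈ W
  · have hsub : Set.range (Sum.inl : Fin k → GkVert k) ⊆ W := by rintro _ ⟨i, rfl⟩; exact hA i
    have h1 : (Set.range (Sum.inl : Fin k → GkVert k)).ncard = k := by
      rw [← Nat.card_coe_set_eq, Nat.card_range_of_injective Sum.inl_injective,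
        Nat.card_eq_fintype_card, Fintype.card_fin]
    calc k = _ := h1.symm
      _ ≤ W.ncard := Set.ncard_le_ncard hsub hWfin
  · push_neg at hA
    obtain ⟨i₀, hi₀⟩ := hA
    set AW : Finset (Fin k) := Finset.univ.filter (fun i => Sum.inl i ∈ W) with hAW
    set N : Finset {S : Finset (Fin k) // S.Nonempty} :=
      Finset.univ.filter
        (fun S => (Sum.inr (Sum.inl S) : GkVert k) ∉ W ∧ (Sum.inr (Sum.inr S) : GkVert k) ∉ W)
      with hNdef
    -- the trace map is injective on N
    have htr : Set.InjOn (fun S : {S : Finset (Fin k) // S.Nonempty} => S.val ∩ AW) ↑N := by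
      intro S hS T hT hEq
      simp only [hNdef, Finset.coe_filter, Set.mem_setOf_eq, Finset.mem_univ, true_and] at hS hT
      by_contra hST
      obtain ⟨z, hzW, hz⟩ := hW (Sum.inr (Sum.inl S)) (Sum.inr (Sum.inl T))
        (by simpa using hST)
      apply hz
      rcases z with a | U | U
      · have haW : a ∈ AW := by simp [hAW, hzW]
        have hEq' : S.val ∩ AW = T.val ∩ AW := hEq
        have hmem : a ∈ S.val ↔ a ∈ T.val := by
          constructor
          · intro h
            have h2 : a ∈ T.val ∩ AW := hEq' ▸ Finset.mem_inter.mpr ⟨h, haW⟩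
            exact (Finset.mem_inter.mp h2).1
          · intro h
            have h2 : a ∈ S.val ∩ AW := hEq'.symm ▸ Finset.mem_inter.mpr ⟨h, haW⟩
            exact (Finset.mem_inter.mp h2).1
        rw [SimpleGraph.dist_comm, SimpleGraph.dist_comm (v := Sum.inl a)]
        by_cases hm : a ∈ S.val
        · rw [dist_ab_mem hm, dist_ab_mem (hmem.mp hm)]
        · rw [dist_ab_not hm, dist_ab_not (fun h => hm (hmem.mpr h))]
      · have hUS : S ≠ U := fun h => hS.1 (h ▸ hzW)
        have hUT : T ≠ U := fun h => hT.1 (h ▸ hzW)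
        rw [dist_bb hUS, dist_bb hUT]
      · have hUS : S ≠ U := fun h => hS.2 (h ▸ hzW)
        have hUT : T ≠ U := fun h => hT.2 (h ▸ hzW)
        rw [dist_bc_ne hUS, dist_bc_ne hUT]
    have hNcard : N.card ≤ 2 ^ (k - 1) := by
      have h1 : N.card = (N.image (fun S : {S : Finset (Fin k) // S.Nonempty} => S.val ∩ AW)).card :=
        (Finset.card_image_of_injOn htr).symm
      have h2 : N.image (fun S : {S : Finset (Fin k) // S.Nonempty} => S.val ∩ AW) ⊆ AW.powerset := by
        intro x hx
        simp only [Finset.mem_image] at hx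
        obtain ⟨S, _, rfl⟩ := hx
        exact Finset.mem_powerset.mpr Finset.inter_subset_right
      have h3 : AW.card ≤ k - 1 := by
        have hsub : AW ⊆ Finset.univ.erase i₀ := by
          intro a ha
          simp only [hAW, Finset.mem_filter] at ha
          refine Finset.mem_erase.mpr ⟨fun h => hi₀ (h ▸ ha.2), Finset.mem_univ _⟩
        calc AW.card ≤ (Finset.univ.erase i₀).card := Finset.card_le_card hsub
          _ = k - 1 := by rw [Finset.card_erase_of_mem (Finset.mem_univ _)]; simp
      calc N.card = _ := h1
        _ ≤ AW.powerset.card := Finset.card_le_card h2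
        _ = 2 ^ AW.card := Finset.card_powerset _
        _ ≤ 2 ^ (k - 1) := Nat.pow_le_pow_right (by norm_num) h3
    -- the complement injects into W
    set NC : Finset {S : Finset (Fin k) // S.Nonempty} := Finset.univ \ N with hNCdef
    have hNCcard : NC.card ≤ hWfin.toFinset.card := by
      refine Finset.card_le_card_of_injOn
        (fun S => if (Sum.inr (Sum.inl S) : GkVert k) ∈ W then Sum.inr (Sum.inl S)
          else Sum.inr (Sum.inr S)) ?_ ?_
      · intro S hS
        simp only [hNCdef, hNdef, Finset.mem_coe, Finset.mem_sdiff, Finset.mem_filter, Finset.mem_univ,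
          true_and, not_and, not_not] at hS
        dsimp only
        by_cases hb : (Sum.inr (Sum.inl S) : GkVert k) ∈ W
        · rw [if_pos hb]; exact hWfin.mem_toFinset.mpr hb
        · rw [if_neg hb]; exact hWfin.mem_toFinset.mpr (hS hb)
      · intro S _ T _ hEq
        by_cases hbS : (Sum.inr (Sum.inl S) : GkVert k) ∈ W <;>
          by_cases hbT : (Sum.inr (Sum.inl T) : GkVert k) ∈ W <;>
          simp [hbS, hbT] at hEq <;> simpa using hEq
    have htot : NC.card + N.card = 2 ^ k - 1 := by
      rw [hNCdef, Finset.card_sdiff_add_card_eq_card (Finset.subset_univ N),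
        Finset.card_univ, card_nonempty_subsets]
    have hk1 : k + 1 ≤ 2 ^ (k - 1) := by
      have := hpow4 (k - 3)
      have he : k - 3 + 2 = k - 1 := by omega
      rw [he] at this
      omega
    have hsplit : 2 ^ (k - 1) + 2 ^ (k - 1) = 2 ^ k := by
      conv_rhs => rw [show k = (k - 1) + 1 from by omega]
      rw [pow_succ]; omega
    omega

end main

/-- For `k ≥ 3`, the set `A` is a resolving set of `G_k`, every resolving set of
`G_k` has cardinality at least `k`, and hence `dim(G_k) = k`. -/
theorem dim_Gk (k : ℕ) (hk : 3 ≤ k) :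
    IsResolving (Gk k) (Set.range (Sum.inl : Fin k → GkVert k)) ∧
    (∀ W : Set (GkVert k), IsResolving (Gk k) W → k ≤ W.ncard) ∧
    metricDim (Gk k) = k := by
  refine ⟨A_resolving k, fun W hW => lower_bound k hk W hW, ?_⟩
  have hcard : (Set.range (Sum.inl : Fin k → GkVert k)).ncard = k := by
    rw [← Nat.card_coe_set_eq, Nat.card_range_of_injective Sum.inl_injective,
      Nat.card_eq_fintype_card, Fintype.card_fin]
  have hmem : k ∈ {n | ∃ W : Set (GkVert k), W.ncard = n ∧ IsResolving (Gk k) W} :=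
    ⟨_, hcard, A_resolving k⟩
  refine le_antisymm (Nat.sInf_le hmem) ?_
  refine le_csInf ⟨k, hmem⟩ ?_
  rintro n ⟨W, rfl, hW⟩
  exact lower_bound k hk W hW
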